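/- Let $X$ be a nonnegative random variable supported on $[0, tc]$ for some $t \ge 1$, $c > 0$, such that $p \cdot \Pr[X \ge p] \le c$ for all $p > 0$. Then $\mathrm{Var}(X) \le (2t-1)c^2$. -/

import Mathlib

open MeasureTheory ProbabilityTheory

/-- A nonnegative random variable supported on `[0, t·c]`, whose posted-price revenue
is at most `c` at every price, has variance at most `(2t - 1)·c²`. -/
theorem variance_le_of_revenue_le (Ω : Type*) [MeasurableSpace Ω]
    (P : Measure Ω) [IsProbabilityMeasure P]
    (X : Ω → ℝ) (hXm : Measurable X)
    (t c : ℝ) (ht : 1 ≤ t) (hc : 0 < c)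
    (hsupp : ∀ ω, 0 ≤ X ω ∧ X ω ≤ t * c)
    (hrev : ∀ p : ℝ, 0 < p → p * (P {ω | X ω ≥ p}).toReal ≤ c) :
    variance X P ≤ (2 * t - 1) * c ^ 2 := by
  have hX0 : ∀ ω, 0 ≤ X ω := fun ω => (hsupp ω).1
  have hXtc : ∀ ω, X ω ≤ t * c := fun ω => (hsupp ω).2
  have htc : 0 < t * c := mul_pos (lt_of_lt_of_le one_pos ht) hc
  have hℒ : MemLp X 2 P :=
    memLp_of_bounded (a := 0) (b := t * c)
      (Filter.Eventually.of_forall fun ω => ⟨hX0 ω, hXtc ω⟩) hXm.aestronglyMeasurable 2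
  have hXint : Integrable X P := hℒ.integrable one_le_two
  have hX2int : Integrable (fun ω => X ω ^ 2) P := hℒ.integrable_sq
  set m := ∫ ω, X ω ∂P with hm
  have hm0 : 0 ≤ m := integral_nonneg hX0
  -- First moment bound: E[X²] ≤ t·c·E[X]
  have hb1 : ∫ ω, X ω ^ 2 ∂P ≤ t * c * m := by
    rw [hm, ← integral_const_mul]
    exact integral_mono hX2int (hXint.const_mul _)
      (fun ω => by nlinarith [hX0 ω, hXtc ω])
  -- Layer-cake bound: E[X²] ≤ 2·t·c²
  have hb2 : ∫ ω, X ω ^ 2 ∂P ≤ 2 * t * c ^ 2 := by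
    have key := hX2int.integral_eq_integral_Ioc_meas_le (M := (t * c) ^ 2)
      (Filter.Eventually.of_forall fun ω => sq_nonneg _)
      (Filter.Eventually.of_forall fun ω => pow_le_pow_left₀ (hX0 ω) (hXtc ω) 2)
    rw [key]
    have hMpos : (0 : ℝ) ≤ (t * c) ^ 2 := sq_nonneg _
    -- pointwise bound
    have hmono : ∀ s ∈ Set.Ioc (0 : ℝ) ((t * c) ^ 2),
        (P {ω | s ≤ X ω ^ 2}).toReal ≤ c * s ^ (-(1 / 2) : ℝ) := by
      intro s hs
      have hs0 : 0 < s := hs.1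
      have hsqrt : 0 < Real.sqrt s := Real.sqrt_pos.mpr hs0
      have hsub : {ω | s ≤ X ω ^ 2} ⊆ {ω | X ω ≥ Real.sqrt s} := by
        intro ω hω
        have h1 : Real.sqrt s ≤ Real.sqrt (X ω ^ 2) := Real.sqrt_le_sqrt hω
        rwa [Real.sqrt_sq (hX0 ω)] at h1
      have hP : (P {ω | s ≤ X ω ^ 2}).toReal ≤ (P {ω | X ω ≥ Real.sqrt s}).toReal :=
        ENNReal.toReal_mono (measure_ne_top _ _) (measure_mono hsub)
      have hr := hrev (Real.sqrt s) hsqrt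
      have h2 : (P {ω | X ω ≥ Real.sqrt s}).toReal ≤ c / Real.sqrt s := by
        rw [le_div_iff₀ hsqrt]; linarith
      have h3 : c / Real.sqrt s = c * s ^ (-(1 / 2) : ℝ) := by
        rw [Real.sqrt_eq_rpow, div_eq_mul_inv, ← Real.rpow_neg hs0.le]
      linarith [hP.trans h2, h3.le]
    have hgmble : Measurable fun s : ℝ => (P {ω | s ≤ X ω ^ 2}).toReal := by
      refine Measurable.ennreal_toReal (Antitone.measurable ?_)
      intro u v huv
      exact measure_mono fun ω h => le_trans huv h
    have hgint : IntegrableOn (fun s : ℝ => (P {ω | s ≤ X ω ^ 2}).toReal)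
        (Set.Ioc 0 ((t * c) ^ 2)) := by
      refine Measure.integrableOn_of_bounded measure_Ioc_lt_top.ne
        hgmble.aestronglyMeasurable (M := 1) ?_
      refine Filter.Eventually.of_forall fun s => ?_
      rw [Real.norm_eq_abs, abs_of_nonneg ENNReal.toReal_nonneg]
      calc (P {ω | s ≤ X ω ^ 2}).toReal ≤ (1 : ENNReal).toReal :=
            ENNReal.toReal_mono ENNReal.one_ne_top prob_le_one
        _ = 1 := ENNReal.toReal_one
    have hfint : IntegrableOn (fun s : ℝ => c * s ^ (-(1 / 2) : ℝ))
        (Set.Ioc 0 ((t * c) ^ 2)) := by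
      have h := (intervalIntegral.intervalIntegrable_rpow' (a := 0) (b := (t * c) ^ 2)
        (r := -(1 / 2)) (by norm_num)).const_mul c
      rwa [intervalIntegrable_iff_integrableOn_Ioc_of_le hMpos] at h
    have hsq : (((t * c) ^ 2 : ℝ)) ^ ((1 : ℝ) / 2) = t * c := by
      rw [← Real.sqrt_eq_rpow, Real.sqrt_sq htc.le]
    calc ∫ s in Set.Ioc 0 ((t * c) ^ 2), (P {ω | s ≤ X ω ^ 2}).toReal
        ≤ ∫ s in Set.Ioc 0 ((t * c) ^ 2), c * s ^ (-(1 / 2) : ℝ) :=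
          setIntegral_mono_on hgint hfint measurableSet_Ioc hmono
      _ = 2 * t * c ^ 2 := by
          rw [← intervalIntegral.integral_of_le hMpos, intervalIntegral.integral_const_mul,
            integral_rpow (Or.inl (by norm_num)),
            Real.zero_rpow (by norm_num)]
          rw [show (-(1 / 2) + 1 : ℝ) = 1 / 2 by norm_num, hsq]
          ring
  -- Conclude
  have hvar : variance X P = (∫ ω, X ω ^ 2 ∂P) - m ^ 2 := by
    rw [variance_eq_sub hℒ]
    rfl
  rcases le_or_gt c m with h | h
  · rw [hvar]; nlinarith
  · rw [hvar]; nlinarith
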